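/- In the synthetic model C ~ N(0,1), γ(C) = sin(βC), with Gaussian kernel of lengthscale ℓ on C, the population quantity KCI = τ⁴ E[k(C,C')γ(C)γ(C')] evaluates exactly to (τ⁴/2)·e^{−β²}·√(ℓ²/(ℓ²+2))·(e^{2β²/(ℓ²+2)} − 1), which is strictly positive for all ℓ, β, τ > 0, tends to 0 as ℓ → 0⁺, and tends to 0 as ℓ → ∞. -/

import Mathlib

open MeasureTheory ProbabilityTheory Filter
open scoped NNReal

set_option maxHeartbeats 2000000

open Real Complex in
private lemma exp_id1 (l z w x y : ℂ) (hl : l ≠ 0) :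
    (((-y^2/2) : ℂ)) + (-(x-y)^2/(2*l^2) + z*x + w*y)
      = -((1+l^2)/(2*l^2))*y^2 + (x/l^2 + w)*y + (-(1/(2*l^2))*x^2 + z*x) := by
  have hl2 : l^2 ≠ 0 := pow_ne_zero _ hl
  field_simp
  first
  | ring
  | (ring_nf; field_simp [pow_succ]; ring)

open Real Complex in
private lemma exp_id2 (l z w x : ℂ) (hl : l ≠ 0) (h1 : 1 + l^2 ≠ 0) :
    (-x^2/2) + ((-(1/(2*l^2))*x^2 + z*x) + (x/l^2 + w)^2/(4*((1+l^2)/(2*l^2))))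
      = -((l^2+2)/(2*(1+l^2)))*x^2 + (z + w/(1+l^2))*x + w^2 * (l^2/(2*(1+l^2))) := by
  have hl2 : l^2 ≠ 0 := pow_ne_zero _ hl
  field_simp
  ring

open Real Complex in
private lemma integral_gaussian_cexp (A : ℝ) (hA : 0 < A) (c d : ℂ) :
    ∫ y : ℝ, Complex.exp (-(A:ℂ) * y^2 + c*y + d)
      = ((Real.sqrt (π/A) : ℝ) : ℂ) * Complex.exp (d + c^2/(4*A)) := by
  have hb : (-(A:ℂ)).re < 0 := by simpa using hA
  rw [integral_cexp_quadratic hb c d]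
  congr 1
  · rw [neg_neg]
    have h1 : (↑π : ℂ) / (A:ℂ) = ((π/A : ℝ) : ℂ) := by push_cast; ring
    have h2 : ((1:ℂ)/2) = ((1/2 : ℝ) : ℂ) := by norm_num
    rw [h1, h2, ← Complex.ofReal_cpow (by positivity) (1/2)]
    norm_num [Real.sqrt_eq_rpow]
  · congr 1
    rw [mul_neg, div_neg, sub_neg_eq_add]

open Real Complex in
private lemma gauss_transfer (g : ℝ → ℂ) :
    ∫ x, g x ∂(gaussianReal 0 1)
      = ∫ x, ((Real.sqrt (2*π))⁻¹ * Real.exp (-x^2/2) : ℝ) • g x := by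
  rw [gaussianReal_of_var_ne_zero _ one_ne_zero]
  have h : gaussianPDF 0 1 = fun x => ((gaussianPDFReal 0 1 x).toNNReal : ENNReal) := by
    funext x; rfl
  have hm : Measurable (fun x => (gaussianPDFReal 0 1 x).toNNReal) :=
    measurable_real_toNNReal.comp (measurable_gaussianPDFReal 0 1)
  rw [h, integral_withDensity_eq_integral_smul hm g]
  congr 1; funext x
  rw [NNReal.smul_def, Real.coe_toNNReal _ (gaussianPDFReal_nonneg _ _ _)]
  congr 1
  simp [gaussianPDFReal, mul_comm]

open Real Complex in
private lemma re_aux (ℓ u v x y : ℝ) :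
    ((((-(x-y)^2/(2*ℓ^2) : ℝ)) : ℂ) + I*u*x + I*v*y).re = -(x-y)^2/(2*ℓ^2) := by
  simp only [Complex.add_re, Complex.mul_re, Complex.ofReal_re, Complex.ofReal_im,
    Complex.I_re, Complex.I_im, Complex.mul_im]
  ring

open Real Complex in
private lemma im_aux (ℓ u v x y : ℝ) :
    ((((-(x-y)^2/(2*ℓ^2) : ℝ)) : ℂ) + I*u*x + I*v*y).im = u*x + v*y := by
  simp only [Complex.add_im, Complex.mul_im, Complex.ofReal_re, Complex.ofReal_im,
    Complex.I_re, Complex.I_im, Complex.mul_re, Complex.add_re, Complex.ofReal_im]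
  ring

open Real Complex in
private lemma integrable_g (ℓ u v : ℝ) :
    Integrable (fun p : ℝ × ℝ =>
      Complex.exp (((-(p.1-p.2)^2/(2*ℓ^2) : ℝ) : ℂ) + I*u*p.1 + I*v*p.2))
      ((gaussianReal 0 1).prod (gaussianReal 0 1)) := by
  have hc : Continuous (fun p : ℝ × ℝ =>
      Complex.exp (((-(p.1-p.2)^2/(2*ℓ^2) : ℝ) : ℂ) + I*u*p.1 + I*v*p.2)) := by
    apply Complex.continuous_exp.comp
    apply Continuous.add
    apply Continuous.add
    · exact Complex.continuous_ofReal.comp (by continuity)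
    · continuity
    · continuity
  refine (integrable_const (1:ℝ)).mono' hc.aestronglyMeasurable (ae_of_all _ fun p => ?_)
  rw [Complex.norm_exp, re_aux]
  simpa using Real.exp_le_one_iff.mpr
    (div_nonpos_of_nonpos_of_nonneg (neg_nonpos.mpr (sq_nonneg _)) (by positivity))

open Real Complex in
private lemma key0 (ℓ : ℝ) (hℓ : 0 < ℓ) (z w : ℂ)
    (hint : Integrable (fun p : ℝ × ℝ =>
        Complex.exp (((-(p.1-p.2)^2/(2*ℓ^2) : ℝ) : ℂ) + z*p.1 + w*p.2))
      ((gaussianReal 0 1).prod (gaussianReal 0 1))) :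
    ∫ p, Complex.exp (((-(p.1-p.2)^2/(2*ℓ^2) : ℝ) : ℂ) + z*p.1 + w*p.2)
        ∂((gaussianReal 0 1).prod (gaussianReal 0 1))
      = ((Real.sqrt (ℓ^2/(ℓ^2+2)) : ℝ) : ℂ)
        * Complex.exp (w^2 * ((ℓ^2/(2*(1+ℓ^2)) : ℝ) : ℂ)
            + (z + w/(((1+ℓ^2 : ℝ)) : ℂ))^2 * (((1+ℓ^2)/(2*(ℓ^2+2)) : ℝ) : ℂ)) := by
  have hℓ0 : (ℓ:ℝ) ≠ 0 := hℓ.ne'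
  have hlc : (ℓ:ℂ) ≠ 0 := Complex.ofReal_ne_zero.mpr hℓ0
  have h1r : (1+ℓ^2 : ℝ) ≠ 0 := by positivity
  have h1c : (1:ℂ) + (ℓ:ℂ)^2 ≠ 0 := by exact_mod_cast h1r
  obtain ⟨A, hAdef⟩ : ∃ A : ℝ, A = (1+ℓ^2)/(2*ℓ^2) := ⟨_, rfl⟩
  obtain ⟨A', hA'def⟩ : ∃ A' : ℝ, A' = (ℓ^2+2)/(2*(1+ℓ^2)) := ⟨_, rfl⟩
  have hA : 0 < A := by rw [hAdef]; positivity
  have hA' : 0 < A' := by rw [hA'def]; positivity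
  have hAc : (A:ℂ) = (1+(ℓ:ℂ)^2)/(2*(ℓ:ℂ)^2) := by rw [hAdef]; push_cast; ring
  have hA'c : (A':ℂ) = ((ℓ:ℂ)^2+2)/(2*(1+(ℓ:ℂ)^2)) := by rw [hA'def]; push_cast; ring
  rw [MeasureTheory.integral_prod _ hint]
  have hinner : ∀ x : ℝ,
      (∫ y, Complex.exp (((-(x-y)^2/(2*ℓ^2) : ℝ) : ℂ) + z*x + w*y) ∂(gaussianReal 0 1))
      = (((Real.sqrt (2*π))⁻¹ * Real.sqrt (π/A) : ℝ) : ℂ)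
        * Complex.exp ((((-(1/(2*ℓ^2))*x^2 : ℝ) : ℂ) + z*x)
            + (((x/ℓ^2 : ℝ) : ℂ) + w)^2/(4*(A:ℂ))) := by
    intro x
    rw [gauss_transfer]
    have hpt : ∀ y : ℝ,
        (((Real.sqrt (2*π))⁻¹ * Real.exp (-y^2/2) : ℝ)) •
          Complex.exp (((-(x-y)^2/(2*ℓ^2) : ℝ) : ℂ) + z*x + w*y)
        = (((Real.sqrt (2*π))⁻¹ : ℝ) : ℂ) *
          Complex.exp (-(A:ℂ)*y^2 + (((x/ℓ^2 : ℝ) : ℂ) + w)*y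
            + ((((-(1/(2*ℓ^2))*x^2 : ℝ)) : ℂ) + z*x)) := by
      intro y
      rw [Complex.real_smul, Complex.ofReal_mul, Complex.ofReal_exp, mul_assoc,
        ← Complex.exp_add]
      congr 2
      rw [hAc]; push_cast
      exact exp_id1 (ℓ:ℂ) z w x y hlc
    simp only [hpt]
    rw [MeasureTheory.integral_const_mul, integral_gaussian_cexp A hA _ _]
    simp only [Complex.ofReal_mul]
    ring
  simp only [hinner]
  rw [gauss_transfer]
  have hpt2 : ∀ x : ℝ,
      (((Real.sqrt (2*π))⁻¹ * Real.exp (-x^2/2) : ℝ)) •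
        ((((Real.sqrt (2*π))⁻¹ * Real.sqrt (π/A) : ℝ) : ℂ)
          * Complex.exp ((((-(1/(2*ℓ^2))*x^2 : ℝ) : ℂ) + z*x)
              + (((x/ℓ^2 : ℝ) : ℂ) + w)^2/(4*(A:ℂ))))
      = ((((Real.sqrt (2*π))⁻¹ * ((Real.sqrt (2*π))⁻¹ * Real.sqrt (π/A)) : ℝ)) : ℂ)
        * Complex.exp (-(A':ℂ)*x^2 + (z + w/(((1+ℓ^2 : ℝ)) : ℂ))*x
            + w^2 * ((ℓ^2/(2*(1+ℓ^2)) : ℝ) : ℂ)) := by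
    intro x
    rw [Complex.real_smul, Complex.ofReal_mul, Complex.ofReal_exp, mul_mul_mul_comm,
      ← Complex.exp_add, ← Complex.ofReal_mul]
    congr 2
    rw [hAc, hA'c]; push_cast
    exact exp_id2 (ℓ:ℂ) z w x hlc h1c
  simp only [hpt2]
  rw [MeasureTheory.integral_const_mul, integral_gaussian_cexp A' hA' _ _]
  have hconst : (((Real.sqrt (2*π))⁻¹ * ((Real.sqrt (2*π))⁻¹ * Real.sqrt (π/A)) : ℝ))
      * Real.sqrt (π/A') = Real.sqrt (ℓ^2/(ℓ^2+2)) := by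
    rw [show ((Real.sqrt (2*π))⁻¹ : ℝ) = Real.sqrt (2*π)⁻¹ from (Real.sqrt_inv _).symm]
    rw [← Real.sqrt_mul (by positivity), ← Real.sqrt_mul (by positivity),
      ← Real.sqrt_mul (by positivity)]
    congr 1
    rw [hAdef, hA'def]
    field_simp
  have hexp : (w^2 * ((ℓ^2/(2*(1+ℓ^2)) : ℝ) : ℂ)
        + (z + w/(((1+ℓ^2 : ℝ)) : ℂ))^2 * (((1+ℓ^2)/(2*(ℓ^2+2)) : ℝ) : ℂ))
      = (w^2 * ((ℓ^2/(2*(1+ℓ^2)) : ℝ) : ℂ)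
        + (z + w/(((1+ℓ^2 : ℝ)) : ℂ))^2 / (4*(A':ℂ))) := by
    congr 1
    rw [hA'c]
    have h2c : ((ℓ:ℂ)^2+2) ≠ 0 := by
      have : (ℓ^2+2 : ℝ) ≠ 0 := by positivity
      exact_mod_cast this
    push_cast
    rw [eq_div_iff (mul_ne_zero (by norm_num)
      (div_ne_zero h2c (mul_ne_zero two_ne_zero h1c)))]
    field_simp
    ring
  rw [hexp, ← hconst]
  push_cast
  ring

open Real Complex in
private lemma keyK (ℓ : ℝ) (hℓ : 0 < ℓ) (u v : ℝ) :
    ∫ p, Complex.exp (((-(p.1-p.2)^2/(2*ℓ^2) : ℝ) : ℂ) + I*u*p.1 + I*v*p.2)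
        ∂((gaussianReal 0 1).prod (gaussianReal 0 1))
      = ((Real.sqrt (ℓ^2/(ℓ^2+2)) * Real.exp (-(v^2*(ℓ^2/(2*(1+ℓ^2)))
          + (u + v/(1+ℓ^2))^2*((1+ℓ^2)/(2*(ℓ^2+2))))) : ℝ) : ℂ) := by
  rw [key0 ℓ hℓ (I*u) (I*v) (integrable_g ℓ u v)]
  rw [Complex.ofReal_mul, Complex.ofReal_exp]
  congr 1
  rw [show (I*(u:ℂ) + I*(v:ℂ)/((1+ℓ^2 : ℝ) : ℂ))
      = I*((u:ℂ) + (v:ℂ)/((1+ℓ^2 : ℝ):ℂ)) from by ring]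
  simp only [mul_pow, Complex.I_sq]
  push_cast
  ring

open Real Complex in
/-- **Closed form of the population KCI in the synthetic model.**
With `C, C'` i.i.d. `N(0,1)`, `γ(c) = sin(βc)`, a Gaussian kernel of lengthscale `ℓ` on `C`
and noise scale `τ`, the population quantity `KCI = τ⁴ E[k(C,C')γ(C)γ(C')]` evaluates to
`(τ⁴/2)·e^{−β²}·√(ℓ²/(ℓ²+2))·(e^{2β²/(ℓ²+2)} − 1)`, which is strictly positive for all
`ℓ, β, τ > 0`, tends to `0` as `ℓ → 0⁺`, and tends to `0` as `ℓ → ∞`. -/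
theorem kci_closed_form_synthetic
    (τ β : ℝ) (hτ : 0 < τ) (hβ : 0 < β)
    (F : ℝ → ℝ)
    (hF : F = fun ℓ => (τ ^ 4 / 2) * Real.exp (-(β ^ 2)) * Real.sqrt (ℓ ^ 2 / (ℓ ^ 2 + 2))
        * (Real.exp (2 * β ^ 2 / (ℓ ^ 2 + 2)) - 1)) :
    (∀ ℓ : ℝ, 0 < ℓ →
        τ ^ 4 * ∫ p, Real.exp (-(p.1 - p.2) ^ 2 / (2 * ℓ ^ 2))
              * (Real.sin (β * p.1) * Real.sin (β * p.2))
            ∂((gaussianReal 0 1).prod (gaussianReal 0 1))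
          = F ℓ)
    ∧ (∀ ℓ : ℝ, 0 < ℓ → 0 < F ℓ)
    ∧ Tendsto F (nhdsWithin 0 (Set.Ioi 0)) (nhds 0)
    ∧ Tendsto F atTop (nhds 0) := by
  refine ⟨?_, ?_, ?_, ?_⟩
  · -- the exact evaluation
    intro ℓ hℓ
    have h1r : (1+ℓ^2 : ℝ) ≠ 0 := by positivity
    have h2r : (ℓ^2+2 : ℝ) ≠ 0 := by positivity
    have him := integrable_g ℓ β (-β)
    have hip := integrable_g ℓ β β
    have hpoint : ∀ p : ℝ × ℝ,
        Real.exp (-(p.1 - p.2) ^ 2 / (2 * ℓ ^ 2))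
          * (Real.sin (β * p.1) * Real.sin (β * p.2))
        = 2⁻¹ * ((Complex.exp (((-(p.1-p.2)^2/(2*ℓ^2) : ℝ) : ℂ)
              + I*((β:ℝ):ℂ)*p.1 + I*(((-β):ℝ):ℂ)*p.2)).re
            - (Complex.exp (((-(p.1-p.2)^2/(2*ℓ^2) : ℝ) : ℂ)
              + I*((β:ℝ):ℂ)*p.1 + I*((β:ℝ):ℂ)*p.2)).re) := by
      intro p
      rw [Complex.exp_re, Complex.exp_re, re_aux, im_aux, re_aux, im_aux]
      rw [show β*p.1 + (-β)*p.2 = β*p.1 - β*p.2 from by ring]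
      rw [show Real.exp (-(p.1-p.2)^2/(2*ℓ^2)) * Real.cos (β*p.1 - β*p.2)
            - Real.exp (-(p.1-p.2)^2/(2*ℓ^2)) * Real.cos (β*p.1 + β*p.2)
          = Real.exp (-(p.1-p.2)^2/(2*ℓ^2))
            * (Real.cos (β*p.1 - β*p.2) - Real.cos (β*p.1 + β*p.2)) from by ring]
      rw [Real.cos_sub_cos]
      rw [show (β*p.1 - β*p.2 + (β*p.1 + β*p.2))/2 = β*p.1 from by ring]
      rw [show (β*p.1 - β*p.2 - (β*p.1 + β*p.2))/2 = -(β*p.2) from by ring]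
      rw [Real.sin_neg]
      ring
    rw [show (∫ p, Real.exp (-(p.1 - p.2) ^ 2 / (2 * ℓ ^ 2))
          * (Real.sin (β * p.1) * Real.sin (β * p.2))
        ∂((gaussianReal 0 1).prod (gaussianReal 0 1)))
      = ∫ p, 2⁻¹ * ((Complex.exp (((-(p.1-p.2)^2/(2*ℓ^2) : ℝ) : ℂ)
              + I*((β:ℝ):ℂ)*p.1 + I*(((-β):ℝ):ℂ)*p.2)).re
            - (Complex.exp (((-(p.1-p.2)^2/(2*ℓ^2) : ℝ) : ℂ)
              + I*((β:ℝ):ℂ)*p.1 + I*((β:ℝ):ℂ)*p.2)).re)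
        ∂((gaussianReal 0 1).prod (gaussianReal 0 1)) from by
      exact integral_congr_ae (ae_of_all _ hpoint)]
    rw [MeasureTheory.integral_const_mul]
    simp only [← RCLike.re_to_complex]
    rw [MeasureTheory.integral_sub him.re hip.re]
    rw [integral_re him, integral_re hip]
    rw [keyK ℓ hℓ β (-β), keyK ℓ hℓ β β]
    simp only [RCLike.re_to_complex, Complex.ofReal_re]
    have e₁ : ((-β)^2*(ℓ^2/(2*(1+ℓ^2)))
        + (β + (-β)/(1+ℓ^2))^2*((1+ℓ^2)/(2*(ℓ^2+2)))) = β^2*ℓ^2/(ℓ^2+2) := by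
      field_simp
      ring
    have e₂ : (β^2*(ℓ^2/(2*(1+ℓ^2)))
        + (β + β/(1+ℓ^2))^2*((1+ℓ^2)/(2*(ℓ^2+2)))) = β^2 := by
      field_simp
      ring
    rw [e₁, e₂, hF]
    have e₃ : Real.exp (-(β^2*ℓ^2/(ℓ^2+2)))
        = Real.exp (-(β^2)) * Real.exp (2*β^2/(ℓ^2+2)) := by
      rw [← Real.exp_add]
      congr 1
      field_simp
      ring
    rw [e₃]
    ring
  · -- positivity
    intro ℓ hℓ
    rw [hF]
    have h1 : 0 < Real.sqrt (ℓ^2/(ℓ^2+2)) := Real.sqrt_pos.mpr (by positivity)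
    have h2 : 0 < Real.exp (2*β^2/(ℓ^2+2)) - 1 := by
      rw [sub_pos, ← Real.exp_zero]
      exact Real.exp_lt_exp.mpr (by positivity)
    positivity
  · -- limit as ℓ → 0⁺
    have hc : ContinuousAt F 0 := by
      rw [hF]
      apply ContinuousAt.mul
      apply ContinuousAt.mul continuousAt_const
      · exact Real.continuous_sqrt.continuousAt.comp
          (ContinuousAt.div (by fun_prop) (by fun_prop) (by norm_num))
      · exact ContinuousAt.sub
          (Real.continuous_exp.continuousAt.comp
            (ContinuousAt.div (by fun_prop) (by fun_prop) (by norm_num)))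
          continuousAt_const
    have h0 : F 0 = 0 := by rw [hF]; norm_num
    have := hc.continuousWithinAt (s := Set.Ioi (0:ℝ))
    rw [ContinuousWithinAt, h0] at this
    exact this
  · -- limit as ℓ → ∞
    have hT : Tendsto (fun ℓ:ℝ => ℓ^2+2) atTop atTop :=
      tendsto_atTop_add_const_right _ 2 (tendsto_pow_atTop two_ne_zero)
    have h2 : Tendsto (fun ℓ:ℝ => 2*β^2/(ℓ^2+2)) atTop (nhds 0) :=
      Tendsto.div_atTop tendsto_const_nhds hT
    have h3 : Tendsto (fun ℓ:ℝ => Real.exp (2*β^2/(ℓ^2+2)) - 1) atTop (nhds 0) := by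
      have := ((Real.continuous_exp.tendsto 0).comp h2).sub_const 1
      simpa using this
    have h4 : Tendsto (fun ℓ:ℝ => ℓ^2/(ℓ^2+2)) atTop (nhds 1) := by
      have hfun : (fun ℓ:ℝ => ℓ^2/(ℓ^2+2)) = fun ℓ:ℝ => 1 - 2/(ℓ^2+2) := by
        funext ℓ
        have : (ℓ^2+2 : ℝ) ≠ 0 := by positivity
        field_simp
        ring
      rw [hfun]
      have := tendsto_const_nhds (x := (1:ℝ)) (f := atTop).sub
        (Tendsto.div_atTop (tendsto_const_nhds (x := (2:ℝ))) hT)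
      simpa using this
    have h5 : Tendsto (fun ℓ:ℝ => Real.sqrt (ℓ^2/(ℓ^2+2))) atTop (nhds 1) := by
      have := (Real.continuous_sqrt.tendsto 1).comp h4
      simpa [Function.comp_def] using this
    rw [hF]
    have := (tendsto_const_nhds (x := (τ^4/2) * Real.exp (-(β^2))) (f := atTop)).mul h5
    have hfin := this.mul h3
    simpa [mul_assoc] using hfin
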